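/- There is a unique α ∈ (0,1) satisfying ((1 − e^{α−1})/(α e^{α−1}))^{e^{α−1} − 1} = e^{α−1}, and it satisfies 0.26 < α < 0.27 (numerically α ≈ 0.265). -/

import Mathlib

open Real Set

noncomputable def gPLE : ℝ → ℝ := fun a =>
  (Real.exp (a-1) - 1) * (Real.log (1 - Real.exp (a-1)) - Real.log a) + (1-a) * Real.exp (a-1)

lemma exp_lt_one_PLE {a : ℝ} (h : a < 1) : Real.exp (a-1) < 1 :=
  Real.exp_lt_one_iff.mpr (by linarith)

lemma gPLE_hasDerivAt {a : ℝ} (h0 : 0 < a) (h1 : a < 1) :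
    HasDerivAt gPLE
      (Real.exp (a-1) * (Real.log (1 - Real.exp (a-1)) - Real.log a)
        + (1 - Real.exp (a-1))/a + (1-a) * Real.exp (a-1)) a := by
  have hb1 : Real.exp (a-1) < 1 := exp_lt_one_PLE h1
  have hb0 : (0:ℝ) < 1 - Real.exp (a-1) := by linarith
  have he : HasDerivAt (fun x : ℝ => Real.exp (x-1)) (Real.exp (a-1)) a := by
    simpa using ((hasDerivAt_id a).sub_const 1).exp
  have hsub : HasDerivAt (fun x : ℝ => 1 - Real.exp (x-1)) (-Real.exp (a-1)) a := by
    simpa using (he.const_sub 1)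
  have hlog1 : HasDerivAt (fun x : ℝ => Real.log (1 - Real.exp (x-1)))
      (-Real.exp (a-1) / (1 - Real.exp (a-1))) a := hsub.log (ne_of_gt hb0)
  have hlog2 : HasDerivAt Real.log a⁻¹ a := Real.hasDerivAt_log (ne_of_gt h0)
  have hmul : HasDerivAt (fun x : ℝ => (Real.exp (x-1) - 1) * (Real.log (1 - Real.exp (x-1)) - Real.log x))
      (Real.exp (a-1) * (Real.log (1 - Real.exp (a-1)) - Real.log a)
        + (Real.exp (a-1) - 1) * (-Real.exp (a-1) / (1 - Real.exp (a-1)) - a⁻¹)) a :=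
    (he.sub_const 1).mul (hlog1.sub hlog2)
  have hmul2 : HasDerivAt (fun x : ℝ => (1-x) * Real.exp (x-1))
      ((-1) * Real.exp (a-1) + (1-a) * Real.exp (a-1)) a :=
    (((hasDerivAt_id a).const_sub 1)).mul he
  have := hmul.add hmul2
  convert this using 1
  · rfl
  · rfl
  · rfl
  have hne : (1 - Real.exp (a-1)) ≠ 0 := ne_of_gt hb0
  field_simp
  ring

lemma gPLE_deriv_pos {a : ℝ} (h0 : 0 < a) (h1 : a ≤ 1/2) :
    0 < Real.exp (a-1) * (Real.log (1 - Real.exp (a-1)) - Real.log a)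
        + (1 - Real.exp (a-1))/a + (1-a) * Real.exp (a-1) := by
  set b := Real.exp (a-1) with hbdef
  have ha1 : a < 1 := by linarith
  have hb1 : b < 1 := exp_lt_one_PLE ha1
  have hbpos : 0 < b := Real.exp_pos _
  have hb0 : (0:ℝ) < 1 - b := by linarith
  have hexpa : Real.exp (-a) ≥ 1 - a := by
    have := Real.add_one_le_exp (-a); linarith
  have hkey : b * ((1-a) * Real.exp 1) ≤ 1 := by
    have h3 : b * (1-a) * Real.exp 1 ≤ b * Real.exp (-a) * Real.exp 1 := by
      have := mul_le_mul_of_nonneg_left hexpa (le_of_lt hbpos)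
      nlinarith [Real.exp_pos (1:ℝ)]
    have h2 : b * Real.exp (-a) * Real.exp 1 = 1 := by
      rw [hbdef, ← Real.exp_add, ← Real.exp_add, show a - 1 + -a + 1 = 0 by ring, Real.exp_zero]
    nlinarith
  have he1 : (2.7182818283:ℝ) < Real.exp 1 := Real.exp_one_gt_d9
  have hs : (0:ℝ) ≤ 1/2 - a := by linarith
  have hε : (0:ℝ) ≤ Real.exp 1 - 2.7182818283 := by linarith
  have hble : b ≤ 1 - a/2 := by
    by_contra hc
    push_neg at hc
    have hpos : (0:ℝ) < (1-a) * Real.exp 1 := mul_pos (by linarith) (Real.exp_pos 1)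
    have h2 : (1 - a/2) * ((1-a) * Real.exp 1) < b * ((1-a)*Real.exp 1) :=
      mul_lt_mul_of_pos_right hc hpos
    nlinarith [mul_nonneg hε hs, mul_nonneg (mul_nonneg hε hs) hs,
      mul_nonneg hs hs, mul_nonneg h0.le hs]
  have hxhalf : (1:ℝ)/2 ≤ (1-b)/a := by
    rw [le_div_iff₀ h0]; nlinarith
  have hxpos : 0 < (1-b)/a := div_pos hb0 h0
  have hloglb : 1 - a/(1-b) ≤ Real.log ((1-b)/a) := by
    have hinv : Real.log (a/(1-b)) ≤ a/(1-b) - 1 :=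
      Real.log_le_sub_one_of_pos (div_pos h0 hb0)
    have heq : Real.log (a/(1-b)) = - Real.log ((1-b)/a) := by
      rw [← Real.log_inv]; congr 1; field_simp
    rw [heq] at hinv; linarith
  have hlogsplit : Real.log ((1-b)/a) = Real.log (1-b) - Real.log a :=
    Real.log_div (ne_of_gt hb0) (ne_of_gt h0)
  have hfrac : a/(1-b) ≤ 2 := by
    rw [div_le_iff₀ hb0]; nlinarith
  have hba : b * (1 + a^2) < 1 := by
    have hin : 1 + a^2 < (1-a) * Real.exp 1 := by
      nlinarith [mul_nonneg hε hs, mul_nonneg h0.le hs]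
    have : b * (1 + a^2) < b * ((1-a) * Real.exp 1) :=
      mul_lt_mul_of_pos_left hin hbpos
    linarith
  have hmul : b * (Real.log (1-b) - Real.log a) ≥ b * (1 - a/(1-b)) := by
    rw [← hlogsplit]
    exact mul_le_mul_of_nonneg_left hloglb (le_of_lt hbpos)
  have hba2 : b * (1 - a/(1-b)) ≥ -b := by
    have : b * (a/(1-b)) ≤ b * 2 := mul_le_mul_of_nonneg_left hfrac (le_of_lt hbpos)
    nlinarith
  have hfinal : a*b < (1-b)/a := by
    rw [lt_div_iff₀ h0]; nlinarith
  nlinarith [hmul, hba2, hfinal]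

lemma gPLE_strictMonoOn : StrictMonoOn gPLE (Set.Ioc 0 (1/2)) := by
  apply strictMonoOn_of_deriv_pos (convex_Ioc 0 (1/2))
  · intro x hx
    exact ((gPLE_hasDerivAt hx.1 (by linarith [hx.2])).differentiableAt.continuousAt).continuousWithinAt
  · intro x hx
    rw [interior_Ioc] at hx
    rw [(gPLE_hasDerivAt hx.1 (by linarith [hx.2])).deriv]
    exact gPLE_deriv_pos hx.1 hx.2.le

lemma gPLE_pos_right {a : ℝ} (h0 : 1/2 ≤ a) (h1 : a < 1) : 0 < gPLE a := by
  set b := Real.exp (a-1) with hbdef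
  have hb1 : b < 1 := exp_lt_one_PLE h1
  have hbpos : 0 < b := Real.exp_pos _
  have hb0 : (0:ℝ) < 1 - b := by linarith
  have hapos : (0:ℝ) < a := by linarith
  have hge : a ≤ b := by
    have := Real.add_one_le_exp (a-1); rw [← hbdef] at this; linarith
  have hle : 1 - b ≤ a := by linarith
  have hlog : Real.log (1-b) ≤ Real.log a := Real.log_le_log hb0 hle
  have h1' : 0 ≤ (b - 1) * (Real.log (1-b) - Real.log a) := by
    nlinarith [mul_nonneg (show (0:ℝ) ≤ 1 - b by linarith) (show (0:ℝ) ≤ Real.log a - Real.log (1-b) by linarith)]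
  have h2' : 0 < (1-a) * b := mul_pos (by linarith) hbpos
  show 0 < (b - 1) * (Real.log (1-b) - Real.log a) + (1-a) * b
  linarith

lemma gPLE_iff {a : ℝ} (h0 : 0 < a) (h1 : a < 1) :
    (((1 - Real.exp (a - 1)) / (a * Real.exp (a - 1))) ^ (Real.exp (a - 1) - 1)
        = Real.exp (a - 1)) ↔ gPLE a = 0 := by
  set b := Real.exp (a-1) with hbdef
  have hb1 : b < 1 := exp_lt_one_PLE h1
  have hbpos : 0 < b := Real.exp_pos _
  have hb0 : (0:ℝ) < 1 - b := by linarith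
  have hbase : (0:ℝ) < (1 - b) / (a * b) := div_pos hb0 (mul_pos h0 hbpos)
  rw [Real.rpow_def_of_pos hbase]
  rw [show b = Real.exp (a-1) from hbdef, Real.exp_eq_exp]
  have hlog : Real.log ((1 - b) / (a * b)) = Real.log (1-b) - Real.log a - (a-1) := by
    rw [Real.log_div (ne_of_gt hb0) (ne_of_gt (mul_pos h0 hbpos)),
      Real.log_mul (ne_of_gt h0) (ne_of_gt hbpos), hbdef, Real.log_exp]
    ring
  rw [hlog]
  unfold gPLE
  rw [← hbdef]
  constructor <;> intro h <;> nlinarith [h]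

lemma exp74_lb : (2.0942409:ℝ) ≤ Real.exp 0.74 := by
  have h := Real.sum_le_exp_of_nonneg (x := 0.74) (by norm_num) 6
  simp only [Finset.sum_range_succ, Finset.sum_range_zero] at h
  norm_num [Nat.factorial] at h ⊢
  linarith

lemma exp6523_lb : (1.9196297:ℝ) ≤ Real.exp 0.6523 := by
  have h := Real.sum_le_exp_of_nonneg (x := 0.6523) (by norm_num) 6
  simp only [Finset.sum_range_succ, Finset.sum_range_zero] at h
  norm_num [Nat.factorial] at h ⊢
  linarith

lemma exp6978_ub : Real.exp 0.6978 ≤ 2.0096153 := by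
  have h := Real.exp_bound (x := 0.6978) (by norm_num [abs_of_nonneg]) (n := 6) (by norm_num)
  rw [abs_sub_le_iff] at h
  simp only [Finset.sum_range_succ, Finset.sum_range_zero] at h
  norm_num [Nat.factorial, abs_of_nonneg] at h
  linarith [h.1]

lemma exp73_ub : Real.exp 0.73 ≤ 2.0759809 := by
  have h := Real.exp_bound (x := 0.73) (by norm_num [abs_of_nonneg]) (n := 7) (by norm_num)
  rw [abs_sub_le_iff] at h
  simp only [Finset.sum_range_succ, Finset.sum_range_zero] at h
  norm_num [Nat.factorial, abs_of_nonneg] at h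
  linarith [h.1]

lemma expm74_ub : Real.exp ((0.26:ℝ) - 1) ≤ 0.4775 := by
  have h1 : Real.exp ((0.26:ℝ)-1) * Real.exp 0.74 = 1 := by
    rw [← Real.exp_add, show (0.26:ℝ)-1+0.74 = 0 by norm_num, Real.exp_zero]
  nlinarith [exp74_lb, Real.exp_pos ((0.26:ℝ)-1)]

lemma expm73_lb : (0.4817:ℝ) ≤ Real.exp ((0.27:ℝ) - 1) := by
  have h1 : Real.exp ((0.27:ℝ)-1) * Real.exp 0.73 = 1 := by
    rw [← Real.exp_add, show (0.27:ℝ)-1+0.73 = 0 by norm_num, Real.exp_zero]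
  nlinarith [exp73_ub, Real.exp_pos (0.73:ℝ)]

lemma gPLE_26_neg : gPLE 0.26 < 0 := by
  set b := Real.exp ((0.26:ℝ)-1) with hbdef
  have hbpos : 0 < b := Real.exp_pos _
  have hub : b ≤ 0.4775 := expm74_ub
  have hb0 : (0:ℝ) < 1 - b := by linarith
  have hsplit : Real.log (1-b) - Real.log 0.26 = Real.log ((1-b)/0.26) :=
    (Real.log_div (ne_of_gt hb0) (by norm_num)).symm
  have hlb : (0.6978:ℝ) ≤ Real.log ((1-b)/0.26) := by
    rw [Real.le_log_iff_exp_le (by positivity)]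
    calc Real.exp 0.6978 ≤ 2.0096153 := exp6978_ub
      _ ≤ (1-b)/0.26 := by rw [le_div_iff₀ (by norm_num : (0:ℝ) < 0.26)]; linarith
  show (b - 1) * (Real.log (1-b) - Real.log 0.26) + (1-0.26) * b < 0
  rw [hsplit]
  have h1 : (b-1) * Real.log ((1-b)/0.26) ≤ (b-1) * 0.6978 := by
    apply mul_le_mul_of_nonpos_left hlb (by linarith)
  nlinarith

lemma gPLE_27_pos : 0 < gPLE 0.27 := by
  set b := Real.exp ((0.27:ℝ)-1) with hbdef
  have hbpos : 0 < b := Real.exp_pos _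
  have hlbb : (0.4817:ℝ) ≤ b := expm73_lb
  have hb1 : b < 1 := Real.exp_lt_one_iff.mpr (by norm_num)
  have hb0 : (0:ℝ) < 1 - b := by linarith
  have hsplit : Real.log (1-b) - Real.log 0.27 = Real.log ((1-b)/0.27) :=
    (Real.log_div (ne_of_gt hb0) (by norm_num)).symm
  have hub : Real.log ((1-b)/0.27) ≤ 0.6523 := by
    rw [Real.log_le_iff_le_exp (by positivity)]
    calc (1-b)/0.27 ≤ 0.5183/0.27 := by
          rw [div_le_div_iff_of_pos_right (by norm_num : (0:ℝ) < 0.27)]; linarith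
      _ ≤ 1.9196297 := by norm_num
      _ ≤ Real.exp 0.6523 := exp6523_lb
  show 0 < (b - 1) * (Real.log (1-b) - Real.log 0.27) + (1-0.27) * b
  rw [hsplit]
  have h1 : (b-1) * 0.6523 ≤ (b-1) * Real.log ((1-b)/0.27) := by
    apply mul_le_mul_of_nonpos_left hub (by linarith)
  nlinarith

lemma gPLE_root_bounds {a : ℝ} (ha : a ∈ Set.Ioo (0:ℝ) 1) (hg : gPLE a = 0) :
    0.26 < a ∧ a < 0.27 := by
  obtain ⟨ha0, ha1⟩ := ha
  rcases lt_or_ge (1/2 : ℝ) a with h | h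
  · exact absurd hg (gPLE_pos_right h.le ha1).ne'
  have hmem : a ∈ Set.Ioc (0:ℝ) (1/2) := ⟨ha0, h⟩
  have h26 : (0.26:ℝ) ∈ Set.Ioc (0:ℝ) (1/2) := by norm_num
  have h27 : (0.27:ℝ) ∈ Set.Ioc (0:ℝ) (1/2) := by norm_num
  constructor
  · by_contra hc
    push_neg at hc
    have := gPLE_strictMonoOn.monotoneOn hmem h26 hc
    linarith [gPLE_26_neg]
  · by_contra hc
    push_neg at hc
    have := gPLE_strictMonoOn.monotoneOn h27 hmem hc
    linarith [gPLE_27_pos]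

theorem ple_grinding_threshold :
    (∃! α : ℝ, α ∈ Set.Ioo (0:ℝ) 1 ∧
      ((1 - Real.exp (α - 1)) / (α * Real.exp (α - 1))) ^ (Real.exp (α - 1) - 1)
        = Real.exp (α - 1)) ∧
    (∀ α : ℝ, α ∈ Set.Ioo (0:ℝ) 1 →
      ((1 - Real.exp (α - 1)) / (α * Real.exp (α - 1))) ^ (Real.exp (α - 1) - 1)
        = Real.exp (α - 1) →
      0.26 < α ∧ α < 0.27) := by
  have hcont : ContinuousOn gPLE (Set.Icc (0.26:ℝ) 0.27) := by
    intro x hx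
    have hx1 : 0 < x := by have := hx.1; norm_num at this ⊢; linarith
    have hx2 : x < 1 := by have := hx.2; norm_num at this ⊢; linarith
    exact ((gPLE_hasDerivAt hx1 hx2).differentiableAt.continuousAt).continuousWithinAt
  obtain ⟨c, hcmem, hgc⟩ :=
    intermediate_value_Ioo (by norm_num : (0.26:ℝ) ≤ 0.27) hcont
      (Set.mem_Ioo.mpr ⟨gPLE_26_neg, gPLE_27_pos⟩)
  have hc01 : c ∈ Set.Ioo (0:ℝ) 1 := by
    obtain ⟨h1, h2⟩ := hcmem
    constructor <;> norm_num at h1 h2 ⊢ <;> linarith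
  constructor
  · refine ⟨c, ⟨hc01, (gPLE_iff hc01.1 hc01.2).mpr hgc⟩, ?_⟩
    intro y ⟨hy01, hyeq⟩
    have hgy : gPLE y = 0 := (gPLE_iff hy01.1 hy01.2).mp hyeq
    have hyb := gPLE_root_bounds hy01 hgy
    have hcb := gPLE_root_bounds hc01 hgc
    have hymem : y ∈ Set.Ioc (0:ℝ) (1/2) := ⟨hy01.1, by linarith [hyb.2]⟩
    have hcmem2 : c ∈ Set.Ioc (0:ℝ) (1/2) := ⟨hc01.1, by linarith [hcb.2]⟩
    exact gPLE_strictMonoOn.injOn hymem hcmem2 (hgy.trans hgc.symm)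
  · intro a ha heq
    exact gPLE_root_bounds ha ((gPLE_iff ha.1 ha.2).mp heq)
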